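/- Let n be a positive integer and let G be the dihedral group of order 2n. Suppose S ⊆ G satisfies 1 ∉ S, S = S⁻¹, and every element of G is a product of at most two elements of S, with d = |S|. Then 2n ≤ (d + 1)²/2, i.e. |S| ≥ 2√n − 1. -/

import Mathlib

open Finset Pointwise

/-- **Upper bound for dihedral groups.** Let `G` be the dihedral group of order `2n`
(`n ≥ 1`) and let `S ⊆ G` be inverse-closed, avoid the identity, and be such that every
element of `G` is a product of at most two elements of `S` (so `Cay(G,S)` has diameter at
most 2 and degree `d = |S|`). Then `2n ≤ (d+1)²/2`, i.e. `d ≥ 2√n - 1`. -/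
theorem dihedral_diameter_two_upper_bound (n : ℕ) (hn : 0 < n)
    (S : Finset (DihedralGroup n))
    (h1 : (1 : DihedralGroup n) ∉ S)
    (hinv : ∀ s ∈ S, s⁻¹ ∈ S)
    (hcov : ∀ g : DihedralGroup n, g = 1 ∨ g ∈ S ∨ ∃ a ∈ S, ∃ b ∈ S, g = a * b)
    (d : ℕ) (hd : d = S.card) :
    (2 * n : ℝ) ≤ ((d : ℝ) + 1) ^ 2 / 2 ∧ (d : ℝ) ≥ 2 * Real.sqrt n - 1 := by
  classical
  haveI : NeZero n := ⟨hn.ne'⟩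
  set A : Finset (ZMod n) := univ.filter (fun i => DihedralGroup.r i ∈ S) with hA
  set B : Finset (ZMod n) := univ.filter (fun i => DihedralGroup.sr i ∈ S) with hB
  have hrinj : Function.Injective (DihedralGroup.r (n := n)) := fun a b h => by
    injection h
  have hsrinj : Function.Injective (DihedralGroup.sr (n := n)) := fun a b h => by
    injection h
  have himg : S = A.image DihedralGroup.r ∪ B.image DihedralGroup.sr := by
    ext g
    cases g with
    | r i => simp [hA, hB]
    | sr i => simp [hA, hB]
  have hcard : A.card + B.card = S.card := by
    rw [himg, card_union_of_disjoint, card_image_of_injective _ hrinj,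
      card_image_of_injective _ hsrinj]
    simp [Finset.disjoint_left]
  have hcover : (univ : Finset (ZMod n)) ⊆ B + insert 0 A := by
    intro k _
    rcases hcov (DihedralGroup.sr k) with h | h | ⟨a, ha, b, hb, hab⟩
    · exact absurd h (by simp [DihedralGroup.one_def, -DihedralGroup.r_zero])
    · have : k + 0 ∈ B + insert 0 A :=
        Finset.add_mem_add (by simp [hB, h]) (by simp)
      simpa using this
    · rcases a with i | i <;> rcases b with j | j
      · rw [DihedralGroup.r_mul_r] at hab
        exact absurd hab (by simp)
      · rw [DihedralGroup.r_mul_sr] at hab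
        have hk : k = j - i := by injection hab
        have hi : DihedralGroup.r (-i) ∈ S := by
          have : (DihedralGroup.r i)⁻¹ = DihedralGroup.r (-i) := by
            apply inv_eq_of_mul_eq_one_right
            rw [DihedralGroup.r_mul_r, add_neg_cancel, DihedralGroup.one_def]
          simpa [this] using hinv _ ha
        have : j + (-i) ∈ B + insert 0 A :=
          Finset.add_mem_add (by simp [hB, hb]) (by simp [hA, hi])
        simpa [hk, sub_eq_add_neg] using this
      · rw [DihedralGroup.sr_mul_r] at hab
        have hk : k = i + j := by injection hab
        have : i + j ∈ B + insert 0 A :=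
          Finset.add_mem_add (by simp [hB, ha]) (by simp [hA, hb])
        simpa [hk] using this
      · rw [DihedralGroup.sr_mul_sr] at hab
        exact absurd hab (by simp)
  have hn' : n ≤ B.card * (A.card + 1) := by
    calc n = Fintype.card (ZMod n) := (ZMod.card n).symm
      _ = (univ : Finset (ZMod n)).card := rfl
      _ ≤ (B + insert 0 A).card := Finset.card_le_card hcover
      _ ≤ B.card * (insert 0 A).card := Finset.card_add_le
      _ ≤ B.card * (A.card + 1) := by
          exact Nat.mul_le_mul_left _ (Finset.card_insert_le _ _)
  have hdn : A.card + B.card = d := by rw [hd, hcard]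
  have key : 4 * (n : ℝ) ≤ ((d : ℝ) + 1) ^ 2 := by
    have h1 : (n : ℝ) ≤ (B.card : ℝ) * ((A.card : ℝ) + 1) := by
      exact_mod_cast hn'
    have h2 : (A.card : ℝ) + (B.card : ℝ) = d := by exact_mod_cast hdn
    nlinarith [sq_nonneg ((B.card : ℝ) - ((A.card : ℝ) + 1))]
  constructor
  · linarith
  · have hs : Real.sqrt n ^ 2 = n := Real.sq_sqrt (by positivity)
    have hs0 : 0 ≤ Real.sqrt n := Real.sqrt_nonneg _
    nlinarith [key, hs, hs0]
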